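/- Let u: ℝ² → ℝ be twice continuously differentiable, let A be a 2×2 real matrix with det A = 1, let b ∈ ℝ², and let T(x) = A x + b. If v: ℝ² → ℝ is twice continuously differentiable and satisfies v(T(x)) = u(x) for all x, then the modified affine-invariant gradient magnitude satisfies √(H[v]²/(J[v]² + 1)) evaluated at T(x) equals √(H[u]²/(J[u]² + 1)) evaluated at x, where H[u] = u_xx u_yy − u_xy² and J[u] = u_x² u_yy − 2 u_x u_y u_xy + u_y² u_xx. -/

import Mathlib

open Matrix

noncomputable def pdx (f : ℝ × ℝ → ℝ) (p : ℝ × ℝ) : ℝ := fderiv ℝ f p (1, 0)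
noncomputable def pdy (f : ℝ × ℝ → ℝ) (p : ℝ × ℝ) : ℝ := fderiv ℝ f p (0, 1)
noncomputable def pdxx (f : ℝ × ℝ → ℝ) : ℝ × ℝ → ℝ := pdx (pdx f)
noncomputable def pdxy (f : ℝ × ℝ → ℝ) : ℝ × ℝ → ℝ := pdy (pdx f)
noncomputable def pdyy (f : ℝ × ℝ → ℝ) : ℝ × ℝ → ℝ := pdy (pdy f)

/-- `H[u] = u_xx u_yy − u_xy²`. -/
noncomputable def Hinv (f : ℝ × ℝ → ℝ) (p : ℝ × ℝ) : ℝ :=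
  pdxx f p * pdyy f p - (pdxy f p) ^ 2

/-- `J[u] = u_x² u_yy − 2 u_x u_y u_xy + u_y² u_xx`. -/
noncomputable def Jinv (f : ℝ × ℝ → ℝ) (p : ℝ × ℝ) : ℝ :=
  (pdx f p) ^ 2 * pdyy f p - 2 * pdx f p * pdy f p * pdxy f p + (pdy f p) ^ 2 * pdxx f p

/-- The modified affine-invariant gradient magnitude `√(H² / (J² + 1))`. -/
noncomputable def affGrad (f : ℝ × ℝ → ℝ) (p : ℝ × ℝ) : ℝ :=
  Real.sqrt (Hinv f p ^ 2 / (Jinv f p ^ 2 + 1))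

/-! ### Auxiliary lemmas -/

noncomputable def Lmap (a b c d : ℝ) : ℝ × ℝ →L[ℝ] ℝ × ℝ :=
  (a • ContinuousLinearMap.fst ℝ ℝ ℝ + b • ContinuousLinearMap.snd ℝ ℝ ℝ).prod
  (c • ContinuousLinearMap.fst ℝ ℝ ℝ + d • ContinuousLinearMap.snd ℝ ℝ ℝ)

lemma Lmap_apply (a b c d : ℝ) (q : ℝ × ℝ) :
    Lmap a b c d q = (a * q.1 + b * q.2, c * q.1 + d * q.2) := by
  simp [Lmap, smul_eq_mul]

lemma pdx_of_hasFDerivAt {f : ℝ × ℝ → ℝ} {L : ℝ × ℝ →L[ℝ] ℝ} {p : ℝ × ℝ}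
    (h : HasFDerivAt f L p) : pdx f p = L (1, 0) := by
  rw [pdx, h.fderiv]

lemma pdy_of_hasFDerivAt {f : ℝ × ℝ → ℝ} {L : ℝ × ℝ →L[ℝ] ℝ} {p : ℝ × ℝ}
    (h : HasFDerivAt f L p) : pdy f p = L (0, 1) := by
  rw [pdy, h.fderiv]

lemma clm_eval (L : ℝ × ℝ →L[ℝ] ℝ) (x y : ℝ) :
    L (x, y) = x * L (1, 0) + y * L (0, 1) := by
  have h : ((x, y) : ℝ × ℝ) = x • ((1 : ℝ), (0 : ℝ)) + y • ((0 : ℝ), (1 : ℝ)) := by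
    simp [Prod.ext_iff]
  rw [h, map_add, _root_.map_smul, _root_.map_smul, smul_eq_mul, smul_eq_mul]

lemma fderiv_pd {f : ℝ × ℝ → ℝ} {p : ℝ × ℝ}
    (hf : DifferentiableAt ℝ (fderiv ℝ f) p) (w z : ℝ × ℝ) :
    fderiv ℝ (fun q => fderiv ℝ f q w) p z = fderiv ℝ (fderiv ℝ f) p z w := by
  have h : HasFDerivAt (fun q => fderiv ℝ f q w)
      ((ContinuousLinearMap.apply ℝ ℝ w).comp (fderiv ℝ (fderiv ℝ f) p)) p :=
    (ContinuousLinearMap.apply ℝ ℝ w).hasFDerivAt.comp p hf.hasFDerivAt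
  rw [h.fderiv]; rfl

/-- Symmetry of second derivatives for `C²` functions. -/
lemma pd_symm {f : ℝ × ℝ → ℝ} (hf : ContDiff ℝ 2 f) (p : ℝ × ℝ) :
    pdx (pdy f) p = pdy (pdx f) p := by
  have hd : DifferentiableAt ℝ (fderiv ℝ f) p :=
    (hf.fderiv_right (m := 1) le_rfl).differentiable (by norm_num) p
  have hs := (hf.contDiffAt (x := p)).isSymmSndFDerivAt (n := 2) (by simp)
  show fderiv ℝ (fun q => fderiv ℝ f q (0,1)) p (1,0)
      = fderiv ℝ (fun q => fderiv ℝ f q (1,0)) p (0,1)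
  rw [fderiv_pd hd, fderiv_pd hd]
  exact hs (1,0) (0,1)

section Chain

variable {a b c d b₁ b₂ : ℝ} {T : ℝ × ℝ → ℝ × ℝ}
  (hT : ∀ q : ℝ × ℝ, T q = (a * q.1 + b * q.2 + b₁, c * q.1 + d * q.2 + b₂))

include hT

lemma T_hasFDerivAt (p : ℝ × ℝ) : HasFDerivAt T (Lmap a b c d) p := by
  have hTeq : T = fun q => Lmap a b c d q + (b₁, b₂) := by
    funext q; rw [hT q, Lmap_apply]; simp [Prod.ext_iff]
  rw [hTeq]
  exact (Lmap a b c d).hasFDerivAt.add_const (b₁, b₂)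

lemma pdx_comp (f : ℝ × ℝ → ℝ) (p : ℝ × ℝ) (hf : DifferentiableAt ℝ f (T p)) :
    pdx (fun q => f (T q)) p = a * pdx f (T p) + c * pdy f (T p) := by
  have h : HasFDerivAt (fun q => f (T q)) ((fderiv ℝ f (T p)).comp (Lmap a b c d)) p :=
    hf.hasFDerivAt.comp p (T_hasFDerivAt hT p)
  rw [pdx_of_hasFDerivAt h, ContinuousLinearMap.comp_apply, Lmap_apply]
  rw [show (a * 1 + b * 0, c * 1 + d * 0) = ((a : ℝ), (c : ℝ)) by norm_num]
  rw [clm_eval]; rfl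

lemma pdy_comp (f : ℝ × ℝ → ℝ) (p : ℝ × ℝ) (hf : DifferentiableAt ℝ f (T p)) :
    pdy (fun q => f (T q)) p = b * pdx f (T p) + d * pdy f (T p) := by
  have h : HasFDerivAt (fun q => f (T q)) ((fderiv ℝ f (T p)).comp (Lmap a b c d)) p :=
    hf.hasFDerivAt.comp p (T_hasFDerivAt hT p)
  rw [pdy_of_hasFDerivAt h, ContinuousLinearMap.comp_apply, Lmap_apply]
  rw [show (a * 0 + b * 1, c * 0 + d * 1) = ((b : ℝ), (d : ℝ)) by norm_num]
  rw [clm_eval]; rfl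

end Chain

lemma pdx_linear {g h : ℝ × ℝ → ℝ} (a c : ℝ) {p : ℝ × ℝ}
    (hg : DifferentiableAt ℝ g p) (hh : DifferentiableAt ℝ h p) :
    pdx (fun q => a * g q + c * h q) p = a * pdx g p + c * pdx h p := by
  have H : HasFDerivAt (fun q => a * g q + c * h q)
      (a • fderiv ℝ g p + c • fderiv ℝ h p) p :=
    (hg.hasFDerivAt.const_mul a).add (hh.hasFDerivAt.const_mul c)
  rw [pdx_of_hasFDerivAt H]; simp [pdx]

lemma pdy_linear {g h : ℝ × ℝ → ℝ} (a c : ℝ) {p : ℝ × ℝ}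
    (hg : DifferentiableAt ℝ g p) (hh : DifferentiableAt ℝ h p) :
    pdy (fun q => a * g q + c * h q) p = a * pdy g p + c * pdy h p := by
  have H : HasFDerivAt (fun q => a * g q + c * h q)
      (a • fderiv ℝ g p + c • fderiv ℝ h p) p :=
    (hg.hasFDerivAt.const_mul a).add (hh.hasFDerivAt.const_mul c)
  rw [pdy_of_hasFDerivAt H]; simp [pdy]

/-- the modified affine-invariant gradient magnitude `√(H²/(J²+1))` is
equi-affine invariant: if `v ∘ T = u` for `T x = A x + b` with `det A = 1`, then it
takes the same value at `T x` for `v` as at `x` for `u`. -/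
theorem affine_gradient_magnitude_invariant (A : Matrix (Fin 2) (Fin 2) ℝ) (hA : A.det = 1)
    (b₁ b₂ : ℝ) (u v : ℝ × ℝ → ℝ) (hu : ContDiff ℝ 2 u) (hv : ContDiff ℝ 2 v)
    (T : ℝ × ℝ → ℝ × ℝ)
    (hT : ∀ p : ℝ × ℝ, T p = (A 0 0 * p.1 + A 0 1 * p.2 + b₁, A 1 0 * p.1 + A 1 1 * p.2 + b₂))
    (huv : ∀ p : ℝ × ℝ, v (T p) = u p) :
    ∀ p : ℝ × ℝ, affGrad v (T p) = affGrad u p := by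
  intro p
  set a := A 0 0 with ha
  set b := A 0 1 with hb
  set c := A 1 0 with hc
  set d := A 1 1 with hd
  have hdet : a * d - b * c = 1 := by rw [Matrix.det_fin_two] at hA; exact hA
  have hueq : u = fun q => v (T q) := funext fun q => (huv q).symm
  -- differentiability facts
  have hdv : Differentiable ℝ v := hv.differentiable (by norm_num)
  have hdfv : Differentiable ℝ (fderiv ℝ v) :=
    (hv.fderiv_right (m := 1) le_rfl).differentiable (by norm_num)
  have hdvx : Differentiable ℝ (pdx v) := by
    have := hdfv.clm_apply (differentiable_const ((1 : ℝ), (0 : ℝ)))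
    exact this
  have hdvy : Differentiable ℝ (pdy v) := by
    have := hdfv.clm_apply (differentiable_const ((0 : ℝ), (1 : ℝ)))
    exact this
  have hTd : Differentiable ℝ T := fun q => (T_hasFDerivAt hT q).differentiableAt
  -- first derivatives of u
  have hux : ∀ q, pdx u q = a * pdx v (T q) + c * pdy v (T q) := by
    intro q; rw [hueq]; exact pdx_comp hT v q (hdv (T q))
  have huy : ∀ q, pdy u q = b * pdx v (T q) + d * pdy v (T q) := by
    intro q; rw [hueq]; exact pdy_comp hT v q (hdv (T q))
  -- second derivatives of u
  have hpdxu : pdx u = fun q => a * pdx v (T q) + c * pdy v (T q) := funext hux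
  have hpdyu : pdy u = fun q => b * pdx v (T q) + d * pdy v (T q) := funext huy
  have hdvxT : ∀ q, DifferentiableAt ℝ (fun r => pdx v (T r)) q := fun q =>
    (hdvx (T q)).comp q (hTd q)
  have hdvyT : ∀ q, DifferentiableAt ℝ (fun r => pdy v (T r)) q := fun q =>
    (hdvy (T q)).comp q (hTd q)
  have hsymm := pd_symm hv (T p)
  have hxx : pdxx u p =
      a * (a * pdxx v (T p) + c * pdxy v (T p))
        + c * (a * pdxy v (T p) + c * pdyy v (T p)) := by
    rw [pdxx, hpdxu, pdx_linear a c (hdvxT p) (hdvyT p),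
      pdx_comp hT (pdx v) p (hdvx (T p)), pdx_comp hT (pdy v) p (hdvy (T p)),
      hsymm]
    rfl
  have hxy : pdxy u p =
      a * (b * pdxx v (T p) + d * pdxy v (T p))
        + c * (b * pdxy v (T p) + d * pdyy v (T p)) := by
    rw [pdxy, hpdxu, pdy_linear a c (hdvxT p) (hdvyT p),
      pdy_comp hT (pdx v) p (hdvx (T p)), pdy_comp hT (pdy v) p (hdvy (T p)),
      hsymm]
    rfl
  have hyy : pdyy u p =
      b * (b * pdxx v (T p) + d * pdxy v (T p))
        + d * (b * pdxy v (T p) + d * pdyy v (T p)) := by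
    rw [pdyy, hpdyu, pdy_linear b d (hdvxT p) (hdvyT p),
      pdy_comp hT (pdx v) p (hdvx (T p)), pdy_comp hT (pdy v) p (hdvy (T p)),
      hsymm]
    rfl
  -- invariance of H and J
  have hH : Hinv u p = Hinv v (T p) := by
    rw [Hinv, Hinv, hxx, hxy, hyy]
    linear_combination ((a * d - b * c + 1) *
      (pdxx v (T p) * pdyy v (T p) - pdxy v (T p) ^ 2)) * hdet
  have hJ : Jinv u p = Jinv v (T p) := by
    rw [Jinv, Jinv, hxx, hxy, hyy, hux p, huy p]
    linear_combination ((a * d - b * c + 1) *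
      ((pdx v (T p)) ^ 2 * pdyy v (T p)
        - 2 * pdx v (T p) * pdy v (T p) * pdxy v (T p)
        + (pdy v (T p)) ^ 2 * pdxx v (T p))) * hdet
  rw [affGrad, affGrad, hH, hJ]
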